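/- Let G be a locally nilpotent group, x ∈ G, and N a normal subgroup of G with N ∩ C_G(x) = 1. Then N = 1. -/

import Mathlib

open Subgroup

/-- A nontrivial normal subgroup of a nilpotent group meets the center nontrivially. -/
lemma aux_center_meet {K : Type*} [Group K] [Group.IsNilpotent K] {M : Subgroup K}
    (hM : M.Normal) (hMbot : M ≠ ⊥) :
    ∃ z : K, z ∈ M ∧ z ≠ 1 ∧ z ∈ Subgroup.center K := by
  obtain ⟨n, hn⟩ := Group.IsNilpotent.nilpotent (G := K)
  have hex : ∃ m, Subgroup.upperCentralSeries K m ⊓ M ≠ ⊥ := by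
    refine ⟨n, ?_⟩
    rw [hn, top_inf_eq]
    exact hMbot
  classical
  let m := Nat.find hex
  have hm : Subgroup.upperCentralSeries K m ⊓ M ≠ ⊥ := Nat.find_spec hex
  cases hmm : m with
  | zero =>
    exfalso
    apply hm
    rw [hmm, Subgroup.upperCentralSeries_zero, bot_inf_eq]
  | succ k =>
    have hk : Subgroup.upperCentralSeries K k ⊓ M = ⊥ := by
      by_contra hc
      have hle : m ≤ k := Nat.find_le hc
      omega
    obtain ⟨z, hz, hz1⟩ : ∃ z, z ∈ Subgroup.upperCentralSeries K m ⊓ M ∧ z ≠ 1 := by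
      by_contra hc
      push_neg at hc
      apply hm
      ext w
      simp only [Subgroup.mem_bot]
      exact ⟨fun hw => hc w hw, fun hw => by subst hw; exact Subgroup.one_mem _⟩
    refine ⟨z, hz.2, hz1, ?_⟩
    rw [Subgroup.mem_center_iff]
    intro g
    have hzk : z ∈ Subgroup.upperCentralSeries K (k + 1) := hmm ▸ hz.1
    have hcomm : z * g * z⁻¹ * g⁻¹ ∈ Subgroup.upperCentralSeries K k :=
      Subgroup.mem_upperCentralSeries_succ_iff.mp hzk g
    have hcommM : z * g * z⁻¹ * g⁻¹ ∈ M := by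
      have h1 : g * z⁻¹ * g⁻¹ ∈ M := hM.conj_mem _ (M.inv_mem hz.2) g
      have := M.mul_mem hz.2 h1
      simpa [mul_assoc] using this
    have : z * g * z⁻¹ * g⁻¹ ∈ (⊥ : Subgroup K) := by
      rw [← hk]; exact ⟨hcomm, hcommM⟩
    rw [Subgroup.mem_bot, mul_inv_eq_one, mul_inv_eq_iff_eq_mul] at this
    exact this.symm

theorem stmt_13 (G : Type*) [Group G]
    (hln : ∀ s : Finset G, Group.IsNilpotent (Subgroup.closure (s : Set G)))
    (x : G) (N : Subgroup G) (hN : N.Normal)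
    (h : N ⊓ Subgroup.centralizer {x} = ⊥) :
    N = ⊥ := by
  classical
  by_contra hNbot
  obtain ⟨y, hy, hy1⟩ : ∃ y, y ∈ N ∧ y ≠ 1 := by
    by_contra hc
    push_neg at hc
    apply hNbot
    ext w
    simp only [Subgroup.mem_bot]
    exact ⟨fun hw => hc w hw, fun hw => by subst hw; exact N.one_mem⟩
  set H := Subgroup.closure (({x, y} : Finset G) : Set G) with hH
  haveI : Group.IsNilpotent H := hln {x, y}
  have hxH : x ∈ H := Subgroup.subset_closure (by simp)
  have hyH : y ∈ H := Subgroup.subset_closure (by simp)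
  have hnorm : (N.subgroupOf H).Normal := hN.subgroupOf H
  have hne : N.subgroupOf H ≠ ⊥ := by
    intro hb
    have : (⟨y, hyH⟩ : H) ∈ N.subgroupOf H := hy
    rw [hb, Subgroup.mem_bot] at this
    exact hy1 (congrArg Subtype.val this)
  obtain ⟨z, hzM, hz1, hzc⟩ := aux_center_meet hnorm hne
  have hzN : (z : G) ∈ N := hzM
  have hcomm : (z : G) ∈ Subgroup.centralizer {x} := by
    rw [Subgroup.mem_centralizer_iff]
    intro g hg
    rw [Set.mem_singleton_iff] at hg
    rw [hg]
    have := (Subgroup.mem_center_iff.mp hzc ⟨x, hxH⟩)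
    exact congrArg Subtype.val this
  have : (z : G) ∈ N ⊓ Subgroup.centralizer {x} := ⟨hzN, hcomm⟩
  rw [h, Subgroup.mem_bot] at this
  exact hz1 (Subtype.ext this)
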